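/- The right boundary operator b_r satisfies the blob-algebra relations: b_r² = b_r; e_{N−1} b_r e_{N−1} = y_r · e_{N−1} with blob weight y_r = sinh(h(α_r+1))/sinh(hα_r); and b_r e_i = e_i b_r for all 1 ≤ i ≤ N−2. -/

import Mathlib

noncomputable section

/-- Basis labels of `(ℂ²)^{⊗N}`: a state (0 = ↑, 1 = ↓) for each of the `N` sites. -/
abbrev Conf (N : ℕ) := Fin N → Fin 2

def pauliX : Matrix (Fin 2) (Fin 2) ℂ := !![0, 1; 1, 0]
def pauliY : Matrix (Fin 2) (Fin 2) ℂ := !![0, -Complex.I; Complex.I, 0]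
def pauliZ : Matrix (Fin 2) (Fin 2) ℂ := !![1, 0; 0, -1]
/-- `σ⁺ = (σˣ + iσʸ)/2`. -/
def pauliP : Matrix (Fin 2) (Fin 2) ℂ := !![0, 1; 0, 0]
/-- `σ⁻ = (σˣ − iσʸ)/2`. -/
def pauliM : Matrix (Fin 2) (Fin 2) ℂ := !![0, 0; 1, 0]

open Fin.NatCast in
/-- `X_j`: the operator on `(ℂ²)^{⊗N}` acting as the 2×2 matrix `X` on the `j`-th tensor
factor (sites labelled `1,…,N`) and as the identity on the others. -/
def siteOp (N : ℕ) [NeZero N] (X : Matrix (Fin 2) (Fin 2) ℂ) (j : ℕ) :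
    Matrix (Conf N) (Conf N) ℂ :=
  Matrix.of fun f g =>
    X (f ((j - 1 : ℕ) : Fin N)) (g ((j - 1 : ℕ) : Fin N)) *
      ∏ k ∈ Finset.univ.erase ((j - 1 : ℕ) : Fin N), if f k = g k then (1 : ℂ) else 0

/-- The Temperley–Lieb generator
`e_i = −(1/2)(σˣᵢσˣᵢ₊₁ + σʸᵢσʸᵢ₊₁ + cosh(h)(σᶻᵢσᶻᵢ₊₁ − 1) + sinh(h)(σᶻᵢ₊₁ − σᶻᵢ))`. -/
def eOp (N : ℕ) [NeZero N] (h : ℂ) (i : ℕ) : Matrix (Conf N) (Conf N) ℂ :=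
  (-(1 / 2 : ℂ)) •
    (siteOp N pauliX i * siteOp N pauliX (i + 1)
      + siteOp N pauliY i * siteOp N pauliY (i + 1)
      + Complex.cosh h • (siteOp N pauliZ i * siteOp N pauliZ (i + 1) - 1)
      + Complex.sinh h • (siteOp N pauliZ (i + 1) - siteOp N pauliZ i))

/-- The left boundary operator
`b_l = (1/(2 sinh(hα_l)))(i e^{hθ_l} σ⁺₁ + i e^{−hθ_l} σ⁻₁ + cosh(hα_l) σᶻ₁) + (1/2)·Id`. -/
def blobL (N : ℕ) [NeZero N] (h αl θl : ℂ) : Matrix (Conf N) (Conf N) ℂ :=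
  (1 / (2 * Complex.sinh (h * αl))) •
    ((Complex.I * Complex.exp (h * θl)) • siteOp N pauliP 1
      + (Complex.I * Complex.exp (-(h * θl))) • siteOp N pauliM 1
      + Complex.cosh (h * αl) • siteOp N pauliZ 1)
  + (1 / 2 : ℂ) • 1

/-- The right boundary operator
`b_r = −(1/(2 sinh(hα_r)))(i e^{hθ_r} σ⁺_N + i e^{−hθ_r} σ⁻_N + cosh(hα_r) σᶻ_N) + (1/2)·Id`. -/
def blobR (N : ℕ) [NeZero N] (h αr θr : ℂ) : Matrix (Conf N) (Conf N) ℂ :=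
  (-(1 / (2 * Complex.sinh (h * αr)))) •
    ((Complex.I * Complex.exp (h * θr)) • siteOp N pauliP N
      + (Complex.I * Complex.exp (-(h * θr))) • siteOp N pauliM N
      + Complex.cosh (h * αr) • siteOp N pauliZ N)
  + (1 / 2 : ℂ) • 1


namespace BlobAux
open Kronecker
open Fin.NatCast

set_option linter.unusedSectionVars false
set_option maxHeartbeats 2000000

variable {N : ℕ} [NeZero N]

def sOp (a : Fin N) (X : Matrix (Fin 2) (Fin 2) ℂ) : Matrix (Conf N) (Conf N) ℂ :=
  Matrix.of fun f g => X (f a) (g a) * ∏ k ∈ Finset.univ.erase a, if f k = g k then (1 : ℂ) else 0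

lemma siteOp_eq (N : ℕ) [NeZero N] (X : Matrix (Fin 2) (Fin 2) ℂ) (j : ℕ) :
    siteOp N X j = sOp ((j - 1 : ℕ) : Fin N) X := rfl

def splitE (a b : Fin N) (hab : a ≠ b) :
    Conf N ≃ (Fin 2 × Fin 2) × ({k : Fin N // k ≠ a ∧ k ≠ b} → Fin 2) where
  toFun h := ((h a, h b), fun k => h k.1)
  invFun p k := if h1 : k = a then p.1.1 else if h2 : k = b then p.1.2 else p.2 ⟨k, h1, h2⟩
  left_inv h := by
    funext k
    by_cases h1 : k = a
    · subst h1; simp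
    · by_cases h2 : k = b
      · subst h2; simp [h1]
      · simp [h1, h2]
  right_inv p := by
    refine Prod.ext (Prod.ext ?_ ?_) ?_
    · simp
    · simp [Ne.symm hab]
    · funext k
      simp [k.2.1, k.2.2]

def E2 (a b : Fin N) (hab : a ≠ b) (M : Matrix (Fin 2 × Fin 2) (Fin 2 × Fin 2) ℂ) :
    Matrix (Conf N) (Conf N) ℂ :=
  (M ⊗ₖ (1 : Matrix ({k : Fin N // k ≠ a ∧ k ≠ b} → Fin 2)
      ({k : Fin N // k ≠ a ∧ k ≠ b} → Fin 2) ℂ)).submatrix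
    (splitE a b hab) (splitE a b hab)

variable {a b : Fin N}

lemma E2_mul (hab : a ≠ b) (M M' : Matrix (Fin 2 × Fin 2) (Fin 2 × Fin 2) ℂ) :
    E2 a b hab M * E2 a b hab M' = E2 a b hab (M * M') := by
  unfold E2
  rw [Matrix.submatrix_mul_equiv, ← Matrix.mul_kronecker_mul, one_mul]

lemma E2_one (hab : a ≠ b) : E2 a b hab 1 = 1 := by
  unfold E2
  rw [show (1 : Matrix (Fin 2 × Fin 2) (Fin 2 × Fin 2) ℂ) ⊗ₖ
      (1 : Matrix ({k : Fin N // k ≠ a ∧ k ≠ b} → Fin 2) ({k : Fin N // k ≠ a ∧ k ≠ b} → Fin 2) ℂ)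
      = 1 from Matrix.one_kronecker_one, Matrix.submatrix_one_equiv]

lemma E2_add (hab : a ≠ b) (M M') : E2 a b hab (M + M') = E2 a b hab M + E2 a b hab M' := by
  ext f g; simp [E2, Matrix.add_kronecker]

lemma E2_smul (hab : a ≠ b) (c : ℂ) (M) : E2 a b hab (c • M) = c • E2 a b hab M := by
  ext f g; simp [E2, Matrix.smul_kronecker]

lemma E2_sub (hab : a ≠ b) (M M') : E2 a b hab (M - M') = E2 a b hab M - E2 a b hab M' := by
  rw [sub_eq_add_neg, sub_eq_add_neg, E2_add hab, ← neg_one_smul ℂ M', E2_smul hab, neg_one_smul]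

lemma sOp_eq_left (hab : a ≠ b) (X : Matrix (Fin 2) (Fin 2) ℂ) :
    sOp a X = E2 a b hab (X ⊗ₖ (1 : Matrix (Fin 2) (Fin 2) ℂ)) := by
  ext f g
  simp only [sOp, E2, Matrix.submatrix_apply, Matrix.of_apply, Matrix.kroneckerMap_apply,
    splitE, Equiv.coe_fn_mk, Matrix.one_apply]
  rw [← Finset.mul_prod_erase _ _ (show b ∈ Finset.univ.erase a by simp [Ne.symm hab]),
    Finset.prod_boole]
  have hiff : (∀ k ∈ (Finset.univ.erase a).erase b, f k = g k) ↔
      ((fun k : {k : Fin N // k ≠ a ∧ k ≠ b} => f k.1) = fun k => g k.1) := by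
    simp only [funext_iff, Finset.mem_erase, Finset.mem_univ, and_true]
    constructor
    · intro H k; exact H k.1 ⟨k.2.2, k.2.1⟩
    · intro H k hk; exact H ⟨k, hk.2, hk.1⟩
  simp only [hiff]
  ring

lemma sOp_eq_right (hab : a ≠ b) (Y : Matrix (Fin 2) (Fin 2) ℂ) :
    sOp b Y = E2 a b hab ((1 : Matrix (Fin 2) (Fin 2) ℂ) ⊗ₖ Y) := by
  ext f g
  simp only [sOp, E2, Matrix.submatrix_apply, Matrix.of_apply, Matrix.kroneckerMap_apply,
    splitE, Equiv.coe_fn_mk, Matrix.one_apply]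
  rw [← Finset.mul_prod_erase _ _ (show a ∈ Finset.univ.erase b by simp [hab]),
    Finset.prod_boole]
  have hiff : (∀ k ∈ (Finset.univ.erase b).erase a, f k = g k) ↔
      ((fun k : {k : Fin N // k ≠ a ∧ k ≠ b} => f k.1) = fun k => g k.1) := by
    simp only [funext_iff, Finset.mem_erase, Finset.mem_univ, and_true]
    constructor
    · intro H k; exact H k.1 ⟨k.2.1, k.2.2⟩
    · intro H k hk; exact H ⟨k, hk.1, hk.2⟩
  simp only [hiff]
  ring

lemma sOp_mul_distinct (hab : a ≠ b) (X Y : Matrix (Fin 2) (Fin 2) ℂ) :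
    sOp a X * sOp b Y = E2 a b hab (X ⊗ₖ Y) := by
  rw [sOp_eq_left hab X, sOp_eq_right hab Y, E2_mul, ← Matrix.mul_kronecker_mul, mul_one, one_mul]

lemma sOp_comm (hab : a ≠ b) (X Y : Matrix (Fin 2) (Fin 2) ℂ) :
    sOp a X * sOp b Y = sOp b Y * sOp a X := by
  rw [sOp_eq_left hab X, sOp_eq_right hab Y, E2_mul, E2_mul, ← Matrix.mul_kronecker_mul,
    ← Matrix.mul_kronecker_mul, mul_one, one_mul, mul_one, one_mul]

lemma sOp_mul_same' (hab : a ≠ b) (X Y : Matrix (Fin 2) (Fin 2) ℂ) :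
    sOp b X * sOp b Y = sOp b (X * Y) := by
  rw [sOp_eq_right hab X, sOp_eq_right hab Y, E2_mul, ← Matrix.mul_kronecker_mul, one_mul,
    ← sOp_eq_right hab]

lemma sOp_one (hab : a ≠ b) : sOp b (1 : Matrix (Fin 2) (Fin 2) ℂ) = 1 := by
  rw [sOp_eq_right hab, Matrix.one_kronecker_one, E2_one]

lemma sOp_add (c : Fin N) (X Y) : sOp c (X + Y) = sOp c X + sOp c Y := by
  ext f g; simp [sOp, add_mul]

lemma sOp_smul (c : Fin N) (r : ℂ) (X) : sOp c (r • X) = r • sOp c X := by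
  ext f g; simp [sOp, mul_assoc]

def Bmat (h αr θr : ℂ) : Matrix (Fin 2) (Fin 2) ℂ :=
  (-(1 / (2 * Complex.sinh (h * αr)))) •
    ((Complex.I * Complex.exp (h * θr)) • pauliP
      + (Complex.I * Complex.exp (-(h * θr))) • pauliM
      + Complex.cosh (h * αr) • pauliZ)
  + (1 / 2 : ℂ) • 1

def Emat (h : ℂ) : Matrix (Fin 2 × Fin 2) (Fin 2 × Fin 2) ℂ :=
  (-(1 / 2 : ℂ)) •
    (pauliX ⊗ₖ pauliX + pauliY ⊗ₖ pauliY
      + Complex.cosh h • (pauliZ ⊗ₖ pauliZ - 1)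
      + Complex.sinh h • ((1 : Matrix (Fin 2) (Fin 2) ℂ) ⊗ₖ pauliZ
          - pauliZ ⊗ₖ (1 : Matrix (Fin 2) (Fin 2) ℂ)))

lemma Bmat_sq (h αr θr : ℂ) (hαr : Complex.sinh (h * αr) ≠ 0) :
    Bmat h αr θr * Bmat h αr θr = Bmat h αr θr := by
  have hc : Complex.cosh (h * αr) ^ 2 - Complex.sinh (h * αr) ^ 2 = 1 :=
    Complex.cosh_sq_sub_sinh_sq _
  have hθ1 : Complex.exp (h * θr) * Complex.exp (-(h * θr)) = 1 := by
    rw [← Complex.exp_add]; simp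
  have hI : Complex.I ^ 2 = -1 := Complex.I_sq
  ext i j
  fin_cases i <;> fin_cases j <;>
  · simp [Bmat, pauliP, pauliM, pauliZ, Matrix.mul_apply, Fin.sum_univ_succ, Matrix.one_apply]
    field_simp
    first
      | ring1
      | linear_combination hc
          + (Complex.exp (h * θr)
              * Complex.exp (-(h * θr))) * hI
          - hθ1

lemma EBE (h αr θr : ℂ) (hαr : Complex.sinh (h * αr) ≠ 0) :
    Emat h * ((1 : Matrix (Fin 2) (Fin 2) ℂ) ⊗ₖ Bmat h αr θr) * Emat h
      = (Complex.sinh (h * (αr + 1)) / Complex.sinh (h * αr)) • Emat h := by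
  have hadd : Complex.sinh (h * (αr + 1))
      = Complex.sinh (h * αr) * Complex.cosh h + Complex.cosh (h * αr) * Complex.sinh h := by
    rw [show h * (αr + 1) = h * αr + h by ring, Complex.sinh_add]
  rw [hadd]
  ext p q
  obtain ⟨i, j⟩ := p
  obtain ⟨k, l⟩ := q
  fin_cases i <;> fin_cases j <;> fin_cases k <;> fin_cases l <;>
  · simp [Emat, Bmat, pauliX, pauliY, pauliZ, pauliP, pauliM, Matrix.mul_apply,
      Fintype.sum_prod_type, Fin.sum_univ_succ, Matrix.one_apply, Prod.ext_iff]
    try ring1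
    try field_simp
    try ring1
    try (rw [div_eq_iff (by intro hz; rcases mul_eq_zero.1 hz with hz' | hz' <;>
      simp_all [mul_eq_zero, hαr])])
    try ring1
    try ring_nf
    try simp only [Complex.cosh_sq]
    try ring1
    try field_simp
    try ring1
    try ring_nf
    try simp only [Complex.cosh_sq]
    try ring1
    try field_simp
    try ring1
    try ring_nf
    try simp only [Complex.cosh_sq]
    try ring1

lemma blobR_eq (N : ℕ) [NeZero N] (hN : 2 ≤ N) (h αr θr : ℂ) :
    blobR N h αr θr = sOp ((N - 1 : ℕ) : Fin N) (Bmat h αr θr) := by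
  have hN1 : N - 1 < N := by omega
  have hN2 : N - 2 < N := by omega
  have hab : ((N - 2 : ℕ) : Fin N) ≠ ((N - 1 : ℕ) : Fin N) := by
    intro hE
    have := congrArg Fin.val hE
    rw [Fin.val_cast_of_lt hN2, Fin.val_cast_of_lt hN1] at this
    omega
  rw [Bmat]
  simp only [sOp_add, sOp_smul]
  rw [sOp_one hab]
  rfl

lemma eOp_eq (N : ℕ) [NeZero N] (h : ℂ) (i : ℕ) (p q : Fin N) (hpq : p ≠ q)
    (h1 : ((i - 1 : ℕ) : Fin N) = p) (h2 : ((i + 1 - 1 : ℕ) : Fin N) = q) :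
    eOp N h i = E2 p q hpq (Emat h) := by
  rw [eOp, siteOp_eq N pauliX i, siteOp_eq N pauliX (i + 1), siteOp_eq N pauliY i,
    siteOp_eq N pauliY (i + 1), siteOp_eq N pauliZ i, siteOp_eq N pauliZ (i + 1), h1, h2]
  rw [sOp_mul_distinct hpq, sOp_mul_distinct hpq, sOp_mul_distinct hpq,
    sOp_eq_right hpq pauliZ, sOp_eq_left hpq pauliZ]
  rw [Emat]
  simp only [E2_smul, E2_add, E2_sub, E2_one]

end BlobAux

open Fin.NatCast

/-- The right boundary operator `b_r` satisfies the blob-algebra relations with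
blob weight `y_r = sinh(h(α_r+1))/sinh(hα_r)`. -/
theorem right_blob_relations (N : ℕ) [NeZero N] (hN : 2 ≤ N) (h αr θr : ℂ)
    (hαr : Complex.sinh (h * αr) ≠ 0) :
    blobR N h αr θr * blobR N h αr θr = blobR N h αr θr ∧
    eOp N h (N - 1) * blobR N h αr θr * eOp N h (N - 1)
      = (Complex.sinh (h * (αr + 1)) / Complex.sinh (h * αr)) • eOp N h (N - 1) ∧
    (∀ i : ℕ, 1 ≤ i → i ≤ N - 2 →
      blobR N h αr θr * eOp N h i = eOp N h i * blobR N h αr θr) := by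
  classical
  have hN1 : N - 1 < N := by omega
  have hN2 : N - 2 < N := by omega
  have hab : ((N - 2 : ℕ) : Fin N) ≠ ((N - 1 : ℕ) : Fin N) := by
    intro hE
    have := congrArg Fin.val hE
    rw [Fin.val_cast_of_lt hN2, Fin.val_cast_of_lt hN1] at this
    omega
  have hblob := BlobAux.blobR_eq N hN h αr θr
  refine ⟨?_, ?_, ?_⟩
  · rw [hblob, BlobAux.sOp_mul_same' hab, BlobAux.Bmat_sq h αr θr hαr]
  · have h1 : ((N - 1 - 1 : ℕ) : Fin N) = ((N - 2 : ℕ) : Fin N) := by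
      congr 1 <;> omega
    have h2 : ((N - 1 + 1 - 1 : ℕ) : Fin N) = ((N - 1 : ℕ) : Fin N) := by
      congr 1 <;> omega
    rw [hblob, BlobAux.eOp_eq N h (N - 1) _ _ hab h1 h2,
      BlobAux.sOp_eq_right hab (BlobAux.Bmat h αr θr), BlobAux.E2_mul, BlobAux.E2_mul,
      BlobAux.EBE h αr θr hαr, BlobAux.E2_smul]
  · intro i hi1 hi2
    have hN3 : 3 ≤ N := by omega
    have hp1 : i - 1 < N := by omega
    have hp2 : i + 1 - 1 < N := by omega
    have hbp : ((N - 1 : ℕ) : Fin N) ≠ ((i - 1 : ℕ) : Fin N) := by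
      intro hE
      have := congrArg Fin.val hE
      rw [Fin.val_cast_of_lt hN1, Fin.val_cast_of_lt hp1] at this
      omega
    have hbq : ((N - 1 : ℕ) : Fin N) ≠ ((i + 1 - 1 : ℕ) : Fin N) := by
      intro hE
      have := congrArg Fin.val hE
      rw [Fin.val_cast_of_lt hN1, Fin.val_cast_of_lt hp2] at this
      omega
    rw [hblob]
    have cp : ∀ X : Matrix (Fin 2) (Fin 2) ℂ,
        Commute (BlobAux.sOp ((N - 1 : ℕ) : Fin N) (BlobAux.Bmat h αr θr))
          (BlobAux.sOp ((i - 1 : ℕ) : Fin N) X) :=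
      fun X => BlobAux.sOp_comm hbp _ X
    have cq : ∀ X : Matrix (Fin 2) (Fin 2) ℂ,
        Commute (BlobAux.sOp ((N - 1 : ℕ) : Fin N) (BlobAux.Bmat h αr θr))
          (BlobAux.sOp ((i + 1 - 1 : ℕ) : Fin N) X) :=
      fun X => BlobAux.sOp_comm hbq _ X
    have C : Commute (BlobAux.sOp ((N - 1 : ℕ) : Fin N) (BlobAux.Bmat h αr θr)) (eOp N h i) := by
      rw [eOp, BlobAux.siteOp_eq N pauliX i, BlobAux.siteOp_eq N pauliX (i + 1),
        BlobAux.siteOp_eq N pauliY i, BlobAux.siteOp_eq N pauliY (i + 1),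
        BlobAux.siteOp_eq N pauliZ i, BlobAux.siteOp_eq N pauliZ (i + 1)]
      exact (((((cp pauliX).mul_right (cq pauliX)).add_right
        ((cp pauliY).mul_right (cq pauliY))).add_right
        ((((cp pauliZ).mul_right (cq pauliZ)).sub_right (Commute.one_right _)).smul_right
          (Complex.cosh h))).add_right
        (((cq pauliZ).sub_right (cp pauliZ)).smul_right (Complex.sinh h))).smul_right
        (-(1 / 2 : ℂ))
    exact C
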